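/- Let g_i : ℝⁿ → ℝ (i = 1, …, m) be convex functions with C := ∩_{i=1}^m {x ∈ ℝⁿ : g_i(x) ≤ 0} nonempty. Let F : ℝⁿ → ℝⁿ, x ∈ ℝⁿ, β > 0, η ≥ 1, and for each i let u_i ∈ ℝⁿ be a subgradient of g_i at x. Set K := ∩_{i=1}^m {z ∈ ℝⁿ : g_i(x) + ⟨u_i, z − x⟩ ≤ 0}, which is a nonempty closed convex set containing C. If P_K(x − (β/η)F(x)) = x, then g_i(x) ≤ 0 for every i (so x ∈ C) and x ∈ SOL(F,C). -/

import Mathlib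

open scoped RealInnerProductSpace
open Metric Filter

/-- The solution set of the variational inequality problem VIP(F, C). -/
def SOL {n : ℕ} (F : EuclideanSpace ℝ (Fin n) → EuclideanSpace ℝ (Fin n))
    (C : Set (EuclideanSpace ℝ (Fin n))) : Set (EuclideanSpace ℝ (Fin n)) :=
  {x | x ∈ C ∧ ∀ y ∈ C, 0 ≤ ⟪F x, y - x⟫}

theorem stmt_4 {n m : ℕ} (hn : 0 < n) (hm : 0 < m)
    (g : Fin m → EuclideanSpace ℝ (Fin n) → ℝ)
    (hgconv : ∀ i, ConvexOn ℝ Set.univ (g i))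
    (hCne : (⋂ i, {y : EuclideanSpace ℝ (Fin n) | g i y ≤ 0}).Nonempty)
    (F : EuclideanSpace ℝ (Fin n) → EuclideanSpace ℝ (Fin n))
    (x : EuclideanSpace ℝ (Fin n)) (β η : ℝ) (hβ : 0 < β) (hη : 1 ≤ η)
    -- `u i` is a subgradient of `g i` at `x`.
    (u : Fin m → EuclideanSpace ℝ (Fin n))
    (hu : ∀ i, ∀ z, g i x + ⟪u i, z - x⟫ ≤ g i z)
    -- `P_K (x - (β / η) • F x) = x`, where
    -- `K = ⋂ i, {z | g i x + ⟪u i, z - x⟫ ≤ 0}`: `x` is the point of `K` nearest to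
    -- `x - (β / η) • F x`.
    (hfix : x ∈ (⋂ i, {z : EuclideanSpace ℝ (Fin n) | g i x + ⟪u i, z - x⟫ ≤ 0}) ∧
      ∀ y ∈ (⋂ i, {z : EuclideanSpace ℝ (Fin n) | g i x + ⟪u i, z - x⟫ ≤ 0}),
        ‖x - (β / η) • F x - x‖ ≤ ‖x - (β / η) • F x - y‖) :
    (∀ i, g i x ≤ 0) ∧ x ∈ SOL F (⋂ i, {y : EuclideanSpace ℝ (Fin n) | g i y ≤ 0}) := by
  obtain ⟨hxK, hmin⟩ := hfix
  have c0 : 0 < β / η := div_pos hβ (lt_of_lt_of_le one_pos hη)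
  set c : ℝ := β / η with hc
  have hgx : ∀ i, g i x ≤ 0 := by
    intro i
    have := Set.mem_iInter.1 hxK i
    simpa using this
  refine ⟨hgx, Set.mem_iInter.2 fun i => hgx i, ?_⟩
  -- main variational inequality
  intro y hy
  -- y ∈ K
  have hyK : y ∈ ⋂ i, {z : EuclideanSpace ℝ (Fin n) | g i x + ⟪u i, z - x⟫ ≤ 0} := by
    refine Set.mem_iInter.2 fun i => ?_
    have h1 := hu i y
    have h2 : g i y ≤ 0 := by simpa using Set.mem_iInter.1 hy i
    exact le_trans h1 h2
  set d : EuclideanSpace ℝ (Fin n) := y - x with hd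
  set q : EuclideanSpace ℝ (Fin n) := -(c • F x) with hq
  -- key: ⟪q, d⟫ ≤ 0
  have key : ⟪q, d⟫ ≤ 0 := by
    by_contra h
    push_neg at h
    have hdne : ⟪q, d⟫ ≠ 0 := ne_of_gt h
    have hdnorm : 0 < ‖d‖ ^ 2 := by
      rcases eq_or_ne d 0 with h0 | h0
      · exfalso; apply hdne; rw [h0, inner_zero_right]
      · exact pow_pos (norm_pos_iff.mpr h0) 2
    set t : ℝ := min 1 (⟪q, d⟫ / ‖d‖ ^ 2) with ht
    have ht0 : 0 < t := lt_min one_pos (div_pos h hdnorm)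
    have ht1 : t ≤ 1 := min_le_left _ _
    -- the point x + t • d is in K
    have hmem : x + t • d ∈ ⋂ i, {z : EuclideanSpace ℝ (Fin n) | g i x + ⟪u i, z - x⟫ ≤ 0} := by
      refine Set.mem_iInter.2 fun i => ?_
      have h1 : g i x + ⟪u i, d⟫ ≤ 0 := by simpa using Set.mem_iInter.1 hyK i
      have h2 : g i x ≤ 0 := hgx i
      have : g i x + ⟪u i, (x + t • d) - x⟫ = (1 - t) * (g i x) + t * (g i x + ⟪u i, d⟫) := by
        have : (x + t • d) - x = t • d := by abel
        rw [this, real_inner_smul_right]; ring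
      rw [Set.mem_setOf_eq, this]
      have := mul_nonpos_of_nonneg_of_nonpos (by linarith : (0:ℝ) ≤ 1 - t) h2
      have := mul_nonpos_of_nonneg_of_nonpos (le_of_lt ht0) h1
      linarith
    have hle := hmin _ hmem
    have hrw1 : x - c • F x - x = q := by rw [hq]; abel
    have hrw2 : x - c • F x - (x + t • d) = q - t • d := by rw [hq]; abel
    rw [hrw1, hrw2] at hle
    have hsq : ‖q‖ ^ 2 ≤ ‖q - t • d‖ ^ 2 := by
      apply pow_le_pow_left₀ (norm_nonneg _) hle
    have hexp : ‖q - t • d‖ ^ 2 = ‖q‖ ^ 2 - 2 * (t * ⟪q, d⟫) + t ^ 2 * ‖d‖ ^ 2 := by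
      rw [norm_sub_sq_real, real_inner_smul_right, norm_smul]
      simp [abs_of_pos ht0]; ring
    rw [hexp] at hsq
    have h3 : 2 * ⟪q, d⟫ ≤ t * ‖d‖ ^ 2 := by
      have := sq_nonneg t
      nlinarith
    have h4 : t * ‖d‖ ^ 2 ≤ ⟪q, d⟫ := by
      have : t ≤ ⟪q, d⟫ / ‖d‖ ^ 2 := min_le_right _ _
      calc t * ‖d‖ ^ 2 ≤ (⟪q, d⟫ / ‖d‖ ^ 2) * ‖d‖ ^ 2 := by
            exact mul_le_mul_of_nonneg_right this (le_of_lt hdnorm)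
        _ = ⟪q, d⟫ := by exact div_mul_cancel₀ _ (ne_of_gt hdnorm)
    linarith
  -- conclude
  have : ⟪q, d⟫ = -(c * ⟪F x, d⟫) := by
    rw [hq, inner_neg_left, real_inner_smul_left]
  rw [this] at key
  have : 0 ≤ c * ⟪F x, d⟫ := by linarith
  exact nonneg_of_mul_nonneg_right this c0
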